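/- Let π : Σ* → G be a choice of generators for a group G, and suppose there exist a combing R ⊆ Σ* and a constant C ≥ 0 such that every R-triangle T in G has width δ(T) ≤ |T|/75 + C. Then there is a constant D with the following properties: for all g, h ∈ G, every word w ∈ Σ* of length n with π(w) = g⁻¹h, and every v₀ ∈ R with π(v₀) = g⁻¹h, (1) every point of the path of v₀ based at g is at word-metric distance at most n/36 + D from the point set of the path of w based at g; and (2) if moreover w is a geodesic (n = d(g,h)), then every point of the path of w based at g is at word-metric distance at most n/18 + 2D from the point set of the path of v₀ based at g. -/

import Mathlib

/-- The image in `G` of a word over the generating alphabet, for the monoid homomorphism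
`Σ* → G` determined by the letter map `φ`. -/
def wordProd {S G : Type} [Group G] (φ : S → G) (w : List S) : G :=
  (w.map φ).prod

/-- The word metric `d(g,h) = min {|w| : π(w) = g⁻¹h}` on `G`. -/
noncomputable def wdist {S G : Type} [Group G] (φ : S → G) (g h : G) : ℕ :=
  sInf {n : ℕ | ∃ w : List S, wordProd φ w = g⁻¹ * h ∧ w.length = n}

/-- The set of points of the path determined by the word `w` based at `g`. -/
def pathPoints {S G : Type} [Group G] (φ : S → G) (g : G) (w : List S) : Set G :=
  {x | ∃ i ≤ w.length, x = g * wordProd φ (w.take i)}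

/-- A triangle: three vertices joined by three words. -/
structure Tri (S G : Type) [Group G] (φ : S → G) where
  g₀ : G
  g₁ : G
  g₂ : G
  u : List S
  v : List S
  w : List S
  hu : wordProd φ u = g₀⁻¹ * g₁
  hv : wordProd φ v = g₁⁻¹ * g₂
  hw : wordProd φ w = g₂⁻¹ * g₀

/-- A triangle is `δ`-thin if every point on each side is at word-metric distance at most `δ`
from the union of the point sets of the other two sides. -/
def IsThin {S G : Type} [Group G] (φ : S → G) (δ : ℝ) (T : Tri S G φ) : Prop :=
  (∀ p ∈ pathPoints φ T.g₀ T.u,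
      ∃ q ∈ pathPoints φ T.g₁ T.v ∪ pathPoints φ T.g₂ T.w, (wdist φ p q : ℝ) ≤ δ) ∧
  (∀ p ∈ pathPoints φ T.g₁ T.v,
      ∃ q ∈ pathPoints φ T.g₀ T.u ∪ pathPoints φ T.g₂ T.w, (wdist φ p q : ℝ) ≤ δ) ∧
  (∀ p ∈ pathPoints φ T.g₂ T.w,
      ∃ q ∈ pathPoints φ T.g₀ T.u ∪ pathPoints φ T.g₁ T.v, (wdist φ p q : ℝ) ≤ δ)

/-- A triangle is geodesic if each of its three sides is a geodesic. -/
def IsGeodesicTri {S G : Type} [Group G] (φ : S → G) (T : Tri S G φ) : Prop :=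
  T.u.length = wdist φ T.g₀ T.g₁ ∧ T.v.length = wdist φ T.g₁ T.g₂ ∧
    T.w.length = wdist φ T.g₂ T.g₀

/-- `G` is word hyperbolic (with respect to the choice of generators `φ`) if all geodesic
triangles are uniformly thin. -/
def WordHyperbolic {S G : Type} [Group G] (φ : S → G) : Prop :=
  ∃ δ : ℝ, 0 ≤ δ ∧ ∀ T : Tri S G φ, IsGeodesicTri φ T → IsThin φ δ T

/-- A combing: a language projecting onto `G`. -/
def IsCombing {S G : Type} [Group G] (φ : S → G) (R : Language S) : Prop :=
  ∀ g : G, ∃ w ∈ R, wordProd φ w = g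

/-- The word `u#v#w` over `Σ ∪ {#}`, where the letter `#` is modelled by `none`. -/
def hashWord {S : Type} (u v w : List S) : List (Option S) :=
  u.map some ++ [none] ++ v.map some ++ [none] ++ w.map some

/-- The multiplication table `{u#v#w : u,v,w ∈ R, π(u)π(v)π(w) = 1}` determined by
the combing `R`. -/
def multTable {S G : Type} [Group G] (φ : S → G) (R : Language S) : Language (Option S) :=
  {z | ∃ u ∈ R, ∃ v ∈ R, ∃ w ∈ R,
    wordProd φ u * wordProd φ v * wordProd φ w = 1 ∧ z = hashWord u v w}

/-- The width of a triangle: the smallest `δ` for which it is `δ`-thin. -/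
noncomputable def triWidth {S G : Type} [Group G] (φ : S → G) (T : Tri S G φ) : ℝ :=
  sInf {δ : ℝ | IsThin φ δ T}

/-- The norm of a triangle: the maximum word-metric distance between its vertices. -/
noncomputable def triNorm {S G : Type} [Group G] (φ : S → G) (T : Tri S G φ) : ℕ :=
  max (wdist φ T.g₀ T.g₁) (max (wdist φ T.g₁ T.g₂) (wdist φ T.g₀ T.g₂))

namespace CombingAux7

variable {S G : Type} [Group G]

theorem wordProd_append (φ : S → G) (u v : List S) :
    wordProd φ (u ++ v) = wordProd φ u * wordProd φ v := by
  simp [wordProd]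

theorem wordProd_revInv (φ : S → G) (inv : S → S) (hφinv : ∀ a, φ (inv a) = (φ a)⁻¹)
    (l : List S) : wordProd φ (l.reverse.map inv) = (wordProd φ l)⁻¹ := by
  induction l with
  | nil => simp [wordProd]
  | cons a l ih =>
      have h1 : (a :: l).reverse.map inv = l.reverse.map inv ++ [inv a] := by simp
      rw [h1, wordProd_append, ih]
      simp [wordProd, hφinv, mul_inv_rev]

theorem wdist_le (φ : S → G) {g h : G} {w : List S} (hw : wordProd φ w = g⁻¹ * h) :
    wdist φ g h ≤ w.length :=
  Nat.sInf_le ⟨w, hw, rfl⟩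

theorem exists_wdist_word (φ : S → G) (hsurj : Function.Surjective (wordProd φ)) (g h : G) :
    ∃ w : List S, wordProd φ w = g⁻¹ * h ∧ w.length = wdist φ g h := by
  obtain ⟨w, hw⟩ := hsurj (g⁻¹ * h)
  have hne : {n : ℕ | ∃ w : List S, wordProd φ w = g⁻¹ * h ∧ w.length = n}.Nonempty :=
    ⟨w.length, w, hw, rfl⟩
  exact Nat.sInf_mem hne

theorem wdist_self (φ : S → G) (g : G) : wdist φ g g = 0 :=
  Nat.le_zero.mp (wdist_le φ (g := g) (h := g) (w := []) (by simp [wordProd]))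

theorem wdist_symm (φ : S → G) (inv : S → S) (hφinv : ∀ a, φ (inv a) = (φ a)⁻¹)
    (hsurj : Function.Surjective (wordProd φ)) (g h : G) : wdist φ g h = wdist φ h g := by
  have key : ∀ a b : G, wdist φ a b ≤ wdist φ b a := by
    intro a b
    obtain ⟨w, hw, hl⟩ := exists_wdist_word φ hsurj b a
    have hrev : wordProd φ (w.reverse.map inv) = a⁻¹ * b := by
      rw [wordProd_revInv φ inv hφinv, hw]; group
    calc wdist φ a b ≤ (w.reverse.map inv).length := wdist_le φ hrev
      _ = wdist φ b a := by simpa using hl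
  exact le_antisymm (key g h) (key h g)

theorem wdist_triangle (φ : S → G) (hsurj : Function.Surjective (wordProd φ)) (a b c : G) :
    wdist φ a c ≤ wdist φ a b + wdist φ b c := by
  obtain ⟨u, hu, hul⟩ := exists_wdist_word φ hsurj a b
  obtain ⟨v, hv, hvl⟩ := exists_wdist_word φ hsurj b c
  have huv : wordProd φ (u ++ v) = a⁻¹ * c := by rw [wordProd_append, hu, hv]; group
  calc wdist φ a c ≤ (u ++ v).length := wdist_le φ huv
    _ = _ := by simp [hul, hvl]

theorem wdist_one_eq (φ : S → G) (a b : G) : wdist φ (1 : G) (a⁻¹ * b) = wdist φ a b := by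
  unfold wdist
  simp

theorem base_mem_pathPoints (φ : S → G) (g : G) (w : List S) : g ∈ pathPoints φ g w :=
  ⟨0, Nat.zero_le _, by simp [wordProd]⟩

theorem pathPoints_take_subset (φ : S → G) (g : G) (w : List S) (k : ℕ) :
    pathPoints φ g (w.take k) ⊆ pathPoints φ g w := by
  rintro x ⟨i, hi, rfl⟩
  rw [List.length_take] at hi
  refine ⟨min i k, ?_, ?_⟩
  · omega
  · rw [List.take_take]

theorem pathPoints_drop_subset (φ : S → G) (g : G) (w : List S) (k : ℕ) (hk : k ≤ w.length) :
    ∀ x ∈ pathPoints φ (g * wordProd φ (w.take k)) (w.drop k), x ∈ pathPoints φ g w := by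
  rintro x ⟨i, hi, rfl⟩
  rw [List.length_drop] at hi
  refine ⟨k + i, by omega, ?_⟩
  rw [List.take_add, wordProd_append, ← mul_assoc]

theorem pathPoints_revInv_subset (φ : S → G) (inv : S → S) (hφinv : ∀ a, φ (inv a) = (φ a)⁻¹)
    (g : G) (l : List S) :
    ∀ x ∈ pathPoints φ (g * wordProd φ l) (l.reverse.map inv), x ∈ pathPoints φ g l := by
  rintro x ⟨i, hi, rfl⟩
  rw [List.length_map, List.length_reverse] at hi
  refine ⟨l.length - i, by omega, ?_⟩
  have h1 : (l.reverse.map inv).take i = (l.drop (l.length - i)).reverse.map inv := by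
    have h2 : l = l.take (l.length - i) ++ l.drop (l.length - i) := (List.take_append_drop _ _).symm
    have h3 : l.reverse.map inv
        = (l.drop (l.length - i)).reverse.map inv ++ (l.take (l.length - i)).reverse.map inv := by
      conv_lhs => rw [h2]
      simp
    rw [h3, List.take_left']
    rw [List.length_map, List.length_reverse, List.length_drop]
    omega
  have h4 : wordProd φ l
      = wordProd φ (l.take (l.length - i)) * wordProd φ (l.drop (l.length - i)) := by
    rw [← wordProd_append, List.take_append_drop]
  rw [h1, wordProd_revInv φ inv hφinv, h4]
  group


theorem wdist_point_end (φ : S → G) (g h : G) (u : List S) (hu : wordProd φ u = g⁻¹ * h)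
    (i : ℕ) : wdist φ (g * wordProd φ (u.take i)) h ≤ u.length := by
  have h2 : wordProd φ (u.take i) * wordProd φ (u.drop i) = g⁻¹ * h := by
    rw [← wordProd_append, List.take_append_drop, hu]
  have h3 : wordProd φ (u.drop i) = (wordProd φ (u.take i))⁻¹ * (g⁻¹ * h) := by
    rw [← h2]; group
  have h3' : wordProd φ (u.drop i) = (g * wordProd φ (u.take i))⁻¹ * h := by
    rw [h3]; group
  exact (wdist_le φ h3').trans (by rw [List.length_drop]; omega)

theorem isThin_mono (φ : S → G) {δ δ' : ℝ} (h : δ ≤ δ') {T : Tri S G φ} :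
    IsThin φ δ T → IsThin φ δ' T := by
  rintro ⟨h0, h1, h2⟩
  refine ⟨fun p hp => ?_, fun p hp => ?_, fun p hp => ?_⟩
  · obtain ⟨q, hq, hd⟩ := h0 p hp; exact ⟨q, hq, hd.trans h⟩
  · obtain ⟨q, hq, hd⟩ := h1 p hp; exact ⟨q, hq, hd.trans h⟩
  · obtain ⟨q, hq, hd⟩ := h2 p hp; exact ⟨q, hq, hd.trans h⟩

theorem isThin_basic (φ : S → G) (T : Tri S G φ) :
    IsThin φ ((max T.u.length (max T.v.length T.w.length) : ℕ) : ℝ) T := by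
  refine ⟨?_, ?_, ?_⟩
  · rintro p ⟨i, hi, rfl⟩
    refine ⟨T.g₁, Set.mem_union_left _ (base_mem_pathPoints φ T.g₁ T.v), ?_⟩
    have h1 := wdist_point_end φ T.g₀ T.g₁ T.u T.hu i
    exact_mod_cast h1.trans (le_max_left _ _)
  · rintro p ⟨i, hi, rfl⟩
    refine ⟨T.g₂, Set.mem_union_right _ (base_mem_pathPoints φ T.g₂ T.w), ?_⟩
    have h1 := wdist_point_end φ T.g₁ T.g₂ T.v T.hv i
    exact_mod_cast h1.trans (le_max_of_le_right (le_max_left _ _))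
  · rintro p ⟨i, hi, rfl⟩
    refine ⟨T.g₀, Set.mem_union_left _ (base_mem_pathPoints φ T.g₀ T.u), ?_⟩
    have h1 := wdist_point_end φ T.g₂ T.g₀ T.w T.hw i
    exact_mod_cast h1.trans (le_max_of_le_right (le_max_right _ _))

theorem exists_close_side (φ : S → G) {R : Language S} {C : ℝ}
    (hwidth : ∀ T : Tri S G φ, T.u ∈ R → T.v ∈ R → T.w ∈ R →
      triWidth φ T ≤ (triNorm φ T : ℝ) / 75 + C)
    {g₀ g₁ g₂ : G} {u v w : List S}
    (hu : wordProd φ u = g₀⁻¹ * g₁) (hv : wordProd φ v = g₁⁻¹ * g₂)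
    (hw : wordProd φ w = g₂⁻¹ * g₀) (huR : u ∈ R) (hvR : v ∈ R) (hwR : w ∈ R)
    {B : ℝ}
    (hB : ((max (wdist φ g₀ g₁) (max (wdist φ g₁ g₂) (wdist φ g₀ g₂)) : ℕ) : ℝ) ≤ B) :
    ∀ p ∈ pathPoints φ g₀ u, ∃ q, (q ∈ pathPoints φ g₁ v ∨ q ∈ pathPoints φ g₂ w) ∧
      (wdist φ p q : ℝ) ≤ B / 75 + C + 1 := by
  intro p hp
  set T : Tri S G φ := ⟨g₀, g₁, g₂, u, v, w, hu, hv, hw⟩ with hT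
  have hne : {δ : ℝ | IsThin φ δ T}.Nonempty := ⟨_, isThin_basic φ T⟩
  have hBnorm : ((triNorm φ T : ℕ) : ℝ) ≤ B := hB
  have hlt : triWidth φ T < B / 75 + C + 1 :=
    lt_of_le_of_lt (hwidth T huR hvR hwR) (by nlinarith [hBnorm])
  obtain ⟨δ₀, hδ₀, hlt'⟩ := exists_lt_of_csInf_lt hne hlt
  obtain ⟨q, hq, hdq⟩ := hδ₀.1 p hp
  exact ⟨q, hq, hdq.trans hlt'.le⟩

end CombingAux7

/-- Under the flabby-triangle hypothesis there is a constant `D` such that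
any combing path `v₀ ∈ R` from `g` to `h` stays `n/36 + D`-close to any path `w` of length
`n` from `g` to `h`, and if `w` is a geodesic then `w` stays `n/18 + 2D`-close to `v₀`. -/
theorem combing_path_close_to_path {S G : Type} [Fintype S] [Group G]
    (inv : S → S) (hinv_inv : ∀ a, inv (inv a) = a) (hinv_ne : ∀ a, inv a ≠ a)
    (φ : S → G) (hsurj : Function.Surjective (wordProd φ))
    (hφinv : ∀ a, φ (inv a) = (φ a)⁻¹)
    (R : Language S) (hcomb : IsCombing φ R) (C : ℝ) (hC : 0 ≤ C)
    (hwidth : ∀ T : Tri S G φ, T.u ∈ R → T.v ∈ R → T.w ∈ R →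
      triWidth φ T ≤ (triNorm φ T : ℝ) / 75 + C) :
    ∃ D : ℝ, ∀ (g h : G) (w v₀ : List S),
      wordProd φ w = g⁻¹ * h → v₀ ∈ R → wordProd φ v₀ = g⁻¹ * h →
      (∀ p ∈ pathPoints φ g v₀, ∃ q ∈ pathPoints φ g w,
          (wdist φ p q : ℝ) ≤ (w.length : ℝ) / 36 + D) ∧
      (w.length = wdist φ g h →
        ∀ p ∈ pathPoints φ g w, ∃ q ∈ pathPoints φ g v₀,
          (wdist φ p q : ℝ) ≤ (w.length : ℝ) / 18 + 2 * D) := by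
  classical
  open CombingAux7 in
  choose ρ hρR hρπ using hcomb
  set N₀ : ℕ := 1800 * (⌈C⌉₊ + 2) with hN₀def
  clear_value N₀
  have h3600 : 3600 ≤ N₀ := by rw [hN₀def]; omega
  have hNC : (1800 : ℝ) * C + 1825 ≤ (N₀ : ℝ) := by
    have h1 : C ≤ (⌈C⌉₊ : ℝ) := Nat.le_ceil C
    rw [hN₀def]; push_cast; linarith
  -- uniform bound on lengths of combing representatives over the ball of radius N₀
  have hKex : ∃ K : ℕ, ∀ z : G, wdist φ 1 z ≤ N₀ → (ρ z).length ≤ K := by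
    have hfin : {l : List S | l.length ≤ N₀}.Finite := List.finite_length_le S N₀
    have hfin2 : ((fun l : List S => (ρ (wordProd φ l)).length) ''
        {l | l.length ≤ N₀}).Finite := hfin.image _
    obtain ⟨K, hK⟩ := hfin2.bddAbove
    refine ⟨K, fun z hz => ?_⟩
    obtain ⟨w, hw, hl⟩ := CombingAux7.exists_wdist_word φ hsurj 1 z
    have hwz : wordProd φ w = z := by simpa using hw
    have hmem : (ρ z).length ∈ (fun l : List S => (ρ (wordProd φ l)).length) ''
        {l | l.length ≤ N₀} := ⟨w, by rw [Set.mem_setOf_eq, hl]; exact hz, by simp [hwz]⟩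
    exact hK hmem
  obtain ⟨K, hK⟩ := hKex
  set D₁ : ℝ := (N₀ : ℝ) / 75 + C + 1 + K + N₀ with hD₁def
  clear_value D₁
  have hD₁0 : 0 ≤ D₁ := by
    rw [hD₁def]
    have h1 : (0:ℝ) ≤ (N₀:ℝ) := Nat.cast_nonneg _
    have h2 : (0:ℝ) ≤ (K:ℝ) := Nat.cast_nonneg _
    linarith
  -- Claim 1 : combing paths stay (n/36 + D₁)-close to any path with the same endpoints
  have claim1 : ∀ n : ℕ, ∀ g h : G, ∀ w v₀ : List S, w.length = n →
      wordProd φ w = g⁻¹ * h → v₀ ∈ R → wordProd φ v₀ = g⁻¹ * h →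
      ∀ p ∈ pathPoints φ g v₀, ∃ q ∈ pathPoints φ g w,
        (wdist φ p q : ℝ) ≤ (n : ℝ) / 36 + D₁ := by
    intro n
    induction n using Nat.strong_induction_on with
    | _ n IH =>
    intro g h w v₀ hwlen hwπ hvR hvπ p hp
    by_cases hbig : n ≤ N₀
    · -- base case : compare with fixed combing representatives near the endpoints
      have hgh : wdist φ g h ≤ N₀ := le_trans (CombingAux7.wdist_le φ hwπ) (by omega)
      have hhg : wdist φ h g ≤ N₀ := by
        rw [← CombingAux7.wdist_symm φ inv hφinv hsurj g h]; exact hgh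
      have hB : ((max (wdist φ g h) (max (wdist φ h g) (wdist φ g g)) : ℕ) : ℝ) ≤ (N₀ : ℝ) := by
        have h0 : wdist φ g g = 0 := CombingAux7.wdist_self φ g
        have : max (wdist φ g h) (max (wdist φ h g) (wdist φ g g)) ≤ N₀ := by omega
        exact_mod_cast this
      obtain ⟨q', hq', hd⟩ := CombingAux7.exists_close_side φ hwidth hvπ (hρπ (h⁻¹ * g))
        (show wordProd φ (ρ (1:G)) = g⁻¹ * g by rw [hρπ]; group) hvR (hρR _) (hρR _) hB p hp
      have hρhg : (ρ (h⁻¹ * g)).length ≤ K := hK _ (by rw [CombingAux7.wdist_one_eq φ h g]; exact hhg)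
      have hρ1 : (ρ (1 : G)).length ≤ K :=
        hK 1 (by rw [CombingAux7.wdist_self φ 1]; exact Nat.zero_le _)
      have hq'g : wdist φ q' g ≤ K + N₀ := by
        rcases hq' with h1 | h1
        · obtain ⟨i, hi, rfl⟩ := h1
          have e1 : wdist φ h (h * wordProd φ ((ρ (h⁻¹ * g)).take i)) ≤ K := by
            refine le_trans (CombingAux7.wdist_le φ (w := (ρ (h⁻¹ * g)).take i) (by group)) ?_
            rw [List.length_take]; omega
          have e2 : wdist φ (h * wordProd φ ((ρ (h⁻¹ * g)).take i)) h ≤ K := by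
            rw [← CombingAux7.wdist_symm φ inv hφinv hsurj]; exact e1
          have e3 := CombingAux7.wdist_triangle φ hsurj
            (h * wordProd φ ((ρ (h⁻¹ * g)).take i)) h g
          omega
        · obtain ⟨i, hi, rfl⟩ := h1
          have e1 : wdist φ g (g * wordProd φ ((ρ (1:G)).take i)) ≤ K := by
            refine le_trans (CombingAux7.wdist_le φ (w := (ρ (1:G)).take i) (by group)) ?_
            rw [List.length_take]; omega
          have e2 : wdist φ (g * wordProd φ ((ρ (1:G)).take i)) g ≤ K := by
            rw [← CombingAux7.wdist_symm φ inv hφinv hsurj]; exact e1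
          omega
      refine ⟨g, CombingAux7.base_mem_pathPoints φ g w, ?_⟩
      have htri := CombingAux7.wdist_triangle φ hsurj p q' g
      have hfin : (wdist φ p g : ℝ) ≤ D₁ := by
        have c2 : (wdist φ q' g : ℝ) ≤ (K : ℝ) + N₀ := by exact_mod_cast hq'g
        have c3 : (wdist φ p g : ℝ) ≤ (wdist φ p q' : ℝ) + (wdist φ q' g : ℝ) := by
          exact_mod_cast htri
        rw [hD₁def]; linarith
      refine hfin.trans ?_
      have h1 : (0:ℝ) ≤ (n:ℝ) := Nat.cast_nonneg _
      linarith
    · -- inductive step : subdivide w at its midpoint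
      push_neg at hbig
      set k : ℕ := (n + 1) / 2 with hkdef
      clear_value k
      have hsplit : wordProd φ (w.take k) * wordProd φ (w.drop k) = g⁻¹ * h := by
        rw [← CombingAux7.wordProd_append, List.take_append_drop, hwπ]
      set m : G := g * wordProd φ (w.take k) with hmdef
      clear_value m
      have h2 : wordProd φ (w.drop k) = (wordProd φ (w.take k))⁻¹ * (g⁻¹ * h) := by
        rw [← hsplit]; group
      have hdropπ : wordProd φ (w.drop k) = m⁻¹ * h := by
        rw [hmdef, h2]; group
      have htakeπ : wordProd φ (w.take k) = g⁻¹ * m := by rw [hmdef]; group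
      have hgm : wdist φ g m ≤ k := by
        refine le_trans (CombingAux7.wdist_le φ htakeπ) ?_
        rw [List.length_take]; omega
      have hmh : wdist φ m h ≤ n - k := by
        refine le_trans (CombingAux7.wdist_le φ hdropπ) ?_
        rw [List.length_drop]; omega
      have hhm : wdist φ h m ≤ n - k := by
        rw [← CombingAux7.wdist_symm φ inv hφinv hsurj m h]; exact hmh
      have hgh : wdist φ g h ≤ n := le_trans (CombingAux7.wdist_le φ hwπ) (by omega)
      have hB : ((max (wdist φ g h) (max (wdist φ h m) (wdist φ g m)) : ℕ) : ℝ) ≤ (n : ℝ) := by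
        have : max (wdist φ g h) (max (wdist φ h m) (wdist φ g m)) ≤ n := by omega
        exact_mod_cast this
      obtain ⟨q₁, hq₁, hd₁⟩ := CombingAux7.exists_close_side φ hwidth hvπ (hρπ (h⁻¹ * m))
        (hρπ (m⁻¹ * g)) hvR (hρR _) (hρR _) hB p hp
      have hnlarge : (1800:ℝ) * C + 1825 ≤ (n : ℝ) := by
        have h5 : ((N₀:ℕ) : ℝ) ≤ (n : ℝ) := by exact_mod_cast hbig.le
        linarith
      rcases hq₁ with hcase | hcase
      · -- q₁ lies on the combing path from h to m
        have hlen2 : ((w.drop k).reverse.map inv).length = n - k := by simp [hwlen]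
        have hπ2 : wordProd φ ((w.drop k).reverse.map inv) = h⁻¹ * m := by
          rw [CombingAux7.wordProd_revInv φ inv hφinv, hdropπ]; group
        obtain ⟨q, hq, hdq⟩ := IH (n - k) (by omega) h m ((w.drop k).reverse.map inv)
          (ρ (h⁻¹ * m)) hlen2 hπ2 (hρR _) (hρπ _) q₁ hcase
        have hh : h = m * wordProd φ (w.drop k) := by rw [hdropπ]; group
        rw [hh] at hq
        have hq3 : q ∈ pathPoints φ m (w.drop k) :=
          CombingAux7.pathPoints_revInv_subset φ inv hφinv m (w.drop k) q hq
        have hq4 : q ∈ pathPoints φ g w := by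
          refine CombingAux7.pathPoints_drop_subset φ g w k (by omega) q ?_
          rw [← hmdef]; exact hq3
        refine ⟨q, hq4, ?_⟩
        have t1 := CombingAux7.wdist_triangle φ hsurj p q₁ q
        have c1 : ((n - k : ℕ) : ℝ) ≤ ((n : ℝ) + 1) / 2 := by
          have hnat : 2 * (n - k) ≤ n + 1 := by omega
          have := (Nat.cast_le (α := ℝ)).mpr hnat
          push_cast at this; linarith
        have c3 : (wdist φ p q : ℝ) ≤ (wdist φ p q₁ : ℝ) + (wdist φ q₁ q : ℝ) := by
          exact_mod_cast t1
        calc (wdist φ p q : ℝ)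
            ≤ ((n:ℝ)/75 + C + 1) + (((n - k : ℕ):ℝ)/36 + D₁) := by linarith
          _ ≤ (n:ℝ)/36 + D₁ := by linarith
      · -- q₁ lies on the combing path from m to g
        have hlen2 : ((w.take k).reverse.map inv).length = k := by
          simp [hwlen]; omega
        have hπ2 : wordProd φ ((w.take k).reverse.map inv) = m⁻¹ * g := by
          rw [CombingAux7.wordProd_revInv φ inv hφinv, htakeπ]; group
        obtain ⟨q, hq, hdq⟩ := IH k (by omega) m g ((w.take k).reverse.map inv)
          (ρ (m⁻¹ * g)) hlen2 hπ2 (hρR _) (hρπ _) q₁ hcase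
        rw [hmdef] at hq
        have hq3 : q ∈ pathPoints φ g (w.take k) :=
          CombingAux7.pathPoints_revInv_subset φ inv hφinv g (w.take k) q hq
        have hq4 : q ∈ pathPoints φ g w := CombingAux7.pathPoints_take_subset φ g w k hq3
        refine ⟨q, hq4, ?_⟩
        have t1 := CombingAux7.wdist_triangle φ hsurj p q₁ q
        have c1 : ((k : ℕ) : ℝ) ≤ ((n : ℝ) + 1) / 2 := by
          have hnat : 2 * k ≤ n + 1 := by omega
          have := (Nat.cast_le (α := ℝ)).mpr hnat
          push_cast at this; linarith
        have c3 : (wdist φ p q : ℝ) ≤ (wdist φ p q₁ : ℝ) + (wdist φ q₁ q : ℝ) := by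
          exact_mod_cast t1
        calc (wdist φ p q : ℝ)
            ≤ ((n:ℝ)/75 + C + 1) + (((k:ℕ):ℝ)/36 + D₁) := by linarith
          _ ≤ (n:ℝ)/36 + D₁ := by linarith
  -- final constant
  refine ⟨D₁ + 1/2, fun g h w v₀ hwπ hvR hvπ => ⟨?_, ?_⟩⟩
  · intro p hp
    obtain ⟨q, hq, hd⟩ := claim1 w.length g h w v₀ rfl hwπ hvR hvπ p hp
    exact ⟨q, hq, hd.trans (by linarith)⟩
  · intro hgeo p hp
    obtain ⟨i, hi, rfl⟩ := hp
    -- geodesic estimates along w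
    have hub : ∀ a b : ℕ, a ≤ b → b ≤ w.length →
        wdist φ (g * wordProd φ (w.take a)) (g * wordProd φ (w.take b)) ≤ b - a := by
      intro a b hab hbn
      have h1 : w.take b = w.take a ++ (w.drop a).take (b - a) := by
        rw [← List.take_add]; congr 1; omega
      have h2 : wordProd φ ((w.drop a).take (b - a))
          = (g * wordProd φ (w.take a))⁻¹ * (g * wordProd φ (w.take b)) := by
        conv_rhs => rw [h1]
        rw [CombingAux7.wordProd_append]; group
      refine (CombingAux7.wdist_le φ h2).trans ?_
      rw [List.length_take, List.length_drop]; omega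
    have hend : ∀ b : ℕ, wdist φ (g * wordProd φ (w.take b)) h ≤ w.length - b := by
      intro b
      have h2 : wordProd φ (w.take b) * wordProd φ (w.drop b) = g⁻¹ * h := by
        rw [← CombingAux7.wordProd_append, List.take_append_drop, hwπ]
      have h3 : wordProd φ (w.drop b) = (wordProd φ (w.take b))⁻¹ * (g⁻¹ * h) := by
        rw [← h2]; group
      have h4 : wordProd φ (w.drop b) = (g * wordProd φ (w.take b))⁻¹ * h := by
        rw [h3]; group
      refine (CombingAux7.wdist_le φ h4).trans ?_
      rw [List.length_drop]
    have hlb : ∀ a b : ℕ, a ≤ b → b ≤ w.length →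
        b - a ≤ wdist φ (g * wordProd φ (w.take a)) (g * wordProd φ (w.take b)) := by
      intro a b hab hbn
      have h1 : wdist φ g (g * wordProd φ (w.take a)) ≤ a := by
        refine (CombingAux7.wdist_le φ (w := w.take a) (by group)).trans ?_
        rw [List.length_take]; omega
      have h2 := hend b
      have t1 := CombingAux7.wdist_triangle φ hsurj g (g * wordProd φ (w.take a)) h
      have t2 := CombingAux7.wdist_triangle φ hsurj (g * wordProd φ (w.take a))
        (g * wordProd φ (w.take b)) h
      omega
    by_cases hL0 : v₀.length = 0
    · have hv0 : v₀ = [] := List.length_eq_zero_iff.mp hL0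
      have hgh1 : g⁻¹ * h = 1 := by rw [← hvπ, hv0]; simp [wordProd]
      have hgeq : g = h := inv_mul_eq_one.mp hgh1
      have hn0 : w.length = 0 := by rw [hgeo, ← hgeq, CombingAux7.wdist_self]
      have hw0 : w = [] := List.length_eq_zero_iff.mp hn0
      refine ⟨g, CombingAux7.base_mem_pathPoints φ g v₀, ?_⟩
      have hnn : (0:ℝ) ≤ (w.length : ℝ)/18 + 2 * (D₁ + 1/2) := by
        have h1 : (0:ℝ) ≤ (w.length:ℝ) := Nat.cast_nonneg _
        linarith
      have he : w.take i = [] := by rw [hw0]; simp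
      rw [he]
      simpa [wordProd, CombingAux7.wdist_self] using hnn
    · set c : ℝ := (w.length : ℝ)/36 + D₁ with hcdef
      clear_value c
      have hc0 : 0 ≤ c := by
        have h1 : (0:ℝ) ≤ (w.length:ℝ) := Nat.cast_nonneg _
        rw [hcdef]; linarith
      have hσex : ∀ j : ℕ, ∃ t, t ≤ w.length ∧
          (wdist φ (g * wordProd φ (v₀.take j)) (g * wordProd φ (w.take t)) : ℝ) ≤ c ∧
          (j = 0 → t = 0) ∧ (v₀.length ≤ j → t = w.length) := by
        intro j
        rcases Nat.eq_zero_or_pos j with rfl | hj0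
        · refine ⟨0, Nat.zero_le _, ?_, fun _ => rfl,
            fun hLe => absurd (Nat.le_zero.mp hLe) hL0⟩
          simpa [wordProd, CombingAux7.wdist_self] using hc0
        · by_cases hjL : v₀.length ≤ j
          · refine ⟨w.length, le_refl _, ?_, fun h0 => absurd h0 (by omega), fun _ => rfl⟩
            have e1 : v₀.take j = v₀ := List.take_of_length_le hjL
            have e2 : w.take w.length = w := List.take_of_length_le le_rfl
            rw [e1, e2, hvπ, hwπ]
            simpa [CombingAux7.wdist_self] using hc0
          · push_neg at hjL
            obtain ⟨q, hq, hd⟩ := claim1 w.length g h w v₀ rfl hwπ hvR hvπ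
              (g * wordProd φ (v₀.take j)) ⟨j, hjL.le, rfl⟩
            obtain ⟨t, ht, rfl⟩ := hq
            exact ⟨t, ht, by rw [hcdef]; exact hd, fun h0 => absurd h0 (by omega),
              fun hLe => absurd hLe (by omega)⟩
      choose σ hσn hσc hσ0 hσL using hσex
      have hstep : ∀ j, j < v₀.length →
          wdist φ (g * wordProd φ (v₀.take j)) (g * wordProd φ (v₀.take (j+1))) ≤ 1 := by
        intro j hj
        have h1 : v₀.take (j+1) = v₀.take j ++ [v₀.get ⟨j, hj⟩] := by
          rw [List.take_succ, List.getElem?_eq_getElem hj]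
          rfl
        have h2 : wordProd φ [v₀.get ⟨j, hj⟩]
            = (g * wordProd φ (v₀.take j))⁻¹ * (g * wordProd φ (v₀.take (j+1))) := by
          conv_rhs => rw [h1]
          rw [CombingAux7.wordProd_append]; group
        exact (CombingAux7.wdist_le φ h2).trans (by simp)
      set J := Nat.findGreatest (fun j => σ j ≤ i) v₀.length with hJdef
      have hPJ : σ J ≤ i := by
        have h0 : σ 0 = 0 := hσ0 0 rfl
        exact Nat.findGreatest_spec (P := fun j => σ j ≤ i) (Nat.zero_le _)
          (by simpa [h0] using Nat.zero_le i)
      have hJle : J ≤ v₀.length := Nat.findGreatest_le _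
      clear_value J
      by_cases hJL : J = v₀.length
      · have hσJ : σ J = w.length := hσL J (by omega)
        have hi' : i = w.length := le_antisymm hi (by omega)
        refine ⟨g * wordProd φ (v₀.take v₀.length), ⟨v₀.length, le_refl _, rfl⟩, ?_⟩
        have e1 : g * wordProd φ (w.take i) = g * wordProd φ (v₀.take v₀.length) := by
          rw [hi', List.take_length, List.take_length, hwπ, hvπ]
        have hnn : (0:ℝ) ≤ (w.length : ℝ)/18 + 2 * (D₁ + 1/2) := by
          have h1 : (0:ℝ) ≤ (w.length:ℝ) := Nat.cast_nonneg _
          linarith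
        rw [e1]
        simpa [CombingAux7.wdist_self] using hnn
      · have hJlt : J < v₀.length := lt_of_le_of_ne hJle hJL
        have hnP : i < σ (J+1) := by
          have hng := Nat.findGreatest_is_greatest (P := fun j => σ j ≤ i) (n := v₀.length)
            (show Nat.findGreatest (fun j => σ j ≤ i) v₀.length < J + 1 by omega) (by omega)
          omega
        have hgapnat : σ (J+1) - σ J ≤ wdist φ (g * wordProd φ (w.take (σ J)))
            (g * wordProd φ (w.take (σ (J+1)))) :=
          hlb (σ J) (σ (J+1)) (by omega) (hσn (J+1))
        have htri2 : wdist φ (g * wordProd φ (w.take (σ J))) (g * wordProd φ (w.take (σ (J+1))))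
            ≤ wdist φ (g * wordProd φ (w.take (σ J))) (g * wordProd φ (v₀.take J))
              + (wdist φ (g * wordProd φ (v₀.take J)) (g * wordProd φ (v₀.take (J+1)))
                + wdist φ (g * wordProd φ (v₀.take (J+1))) (g * wordProd φ (w.take (σ (J+1))))) :=
          le_trans (CombingAux7.wdist_triangle φ hsurj _ _ _)
            (add_le_add le_rfl (CombingAux7.wdist_triangle φ hsurj _ _ _))
        have hsymJ : (wdist φ (g * wordProd φ (w.take (σ J))) (g * wordProd φ (v₀.take J)) : ℝ)
            ≤ c := by
          rw [CombingAux7.wdist_symm φ inv hφinv hsurj]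
          exact hσc J
        have hsymJ1 : (wdist φ (g * wordProd φ (w.take (σ (J+1))))
            (g * wordProd φ (v₀.take (J+1))) : ℝ) ≤ c := by
          rw [CombingAux7.wdist_symm φ inv hφinv hsurj]
          exact hσc (J+1)
        have hstepJ : (wdist φ (g * wordProd φ (v₀.take J))
            (g * wordProd φ (v₀.take (J+1))) : ℝ) ≤ 1 := by
          exact_mod_cast hstep J hJlt
        have hgap : ((σ (J+1) : ℝ) - (σ J : ℝ)) ≤ 2 * c + 1 := by
          have e1 : ((σ (J+1) : ℝ) - (σ J : ℝ)) = ((σ (J+1) - σ J : ℕ) : ℝ) := by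
            rw [Nat.cast_sub (by omega)]
          have c4 : ((σ (J+1) - σ J : ℕ) : ℝ) ≤ (wdist φ (g * wordProd φ (w.take (σ J)))
              (g * wordProd φ (w.take (σ (J+1)))) : ℝ) := by exact_mod_cast hgapnat
          have c5 : (wdist φ (g * wordProd φ (w.take (σ J)))
              (g * wordProd φ (w.take (σ (J+1)))) : ℝ)
              ≤ (wdist φ (g * wordProd φ (w.take (σ J))) (g * wordProd φ (v₀.take J)) : ℝ)
                + ((wdist φ (g * wordProd φ (v₀.take J)) (g * wordProd φ (v₀.take (J+1))) : ℝ)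
                  + (wdist φ (g * wordProd φ (v₀.take (J+1)))
                      (g * wordProd φ (w.take (σ (J+1)))) : ℝ)) := by exact_mod_cast htri2
          have c6 : (wdist φ (g * wordProd φ (v₀.take (J+1)))
              (g * wordProd φ (w.take (σ (J+1)))) : ℝ) ≤ c := hσc (J+1)
          rw [e1]; linarith
        by_cases hside : ((i:ℝ) - (σ J : ℝ)) ≤ c + 1/2
        · refine ⟨g * wordProd φ (v₀.take J), ⟨J, hJle, rfl⟩, ?_⟩
          have d1 : wdist φ (g * wordProd φ (w.take i)) (g * wordProd φ (w.take (σ J)))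
              ≤ i - σ J := by
            rw [CombingAux7.wdist_symm φ inv hφinv hsurj]
            exact hub (σ J) i hPJ hi
          have tfin := CombingAux7.wdist_triangle φ hsurj (g * wordProd φ (w.take i))
            (g * wordProd φ (w.take (σ J))) (g * wordProd φ (v₀.take J))
          have c1 : (wdist φ (g * wordProd φ (w.take i)) (g * wordProd φ (w.take (σ J))) : ℝ)
              ≤ (i:ℝ) - (σ J : ℝ) := by
            have := (Nat.cast_le (α := ℝ)).mpr d1
            rw [Nat.cast_sub hPJ] at this; exact this
          have c3 : (wdist φ (g * wordProd φ (w.take i)) (g * wordProd φ (v₀.take J)) : ℝ)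
              ≤ (wdist φ (g * wordProd φ (w.take i)) (g * wordProd φ (w.take (σ J))) : ℝ)
                + (wdist φ (g * wordProd φ (w.take (σ J))) (g * wordProd φ (v₀.take J)) : ℝ) := by
            exact_mod_cast tfin
          rw [hcdef] at hsymJ hside
          linarith
        · push_neg at hside
          refine ⟨g * wordProd φ (v₀.take (J+1)), ⟨J+1, hJlt, rfl⟩, ?_⟩
          have hb2 : ((σ (J+1) : ℝ) - (i:ℝ)) ≤ c + 1/2 := by linarith
          have d1 : wdist φ (g * wordProd φ (w.take i)) (g * wordProd φ (w.take (σ (J+1))))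
              ≤ σ (J+1) - i := hub i (σ (J+1)) (by omega) (hσn (J+1))
          have tfin := CombingAux7.wdist_triangle φ hsurj (g * wordProd φ (w.take i))
            (g * wordProd φ (w.take (σ (J+1)))) (g * wordProd φ (v₀.take (J+1)))
          have c1 : (wdist φ (g * wordProd φ (w.take i)) (g * wordProd φ (w.take (σ (J+1)))) : ℝ)
              ≤ (σ (J+1) : ℝ) - (i:ℝ) := by
            have := (Nat.cast_le (α := ℝ)).mpr d1
            rw [Nat.cast_sub (by omega)] at this; exact this
          have c3 : (wdist φ (g * wordProd φ (w.take i)) (g * wordProd φ (v₀.take (J+1))) : ℝ)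
              ≤ (wdist φ (g * wordProd φ (w.take i)) (g * wordProd φ (w.take (σ (J+1)))) : ℝ)
                + (wdist φ (g * wordProd φ (w.take (σ (J+1))))
                    (g * wordProd φ (v₀.take (J+1))) : ℝ) := by
            exact_mod_cast tfin
          rw [hcdef] at hsymJ1 hb2
          linarith
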